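/- Let k be a commutative ring and n ≥ d ≥ 0. Let X = k^n. In the category of strict polynomial bifunctors (contravariant in the first variable, covariant in the second), there is an epimorphism θ : Γ^{2d}(Hom((X,X), (−,−))) ↠ Γ^d(gl), where gl(V,W) = Hom_k(V,W), such that under evaluation at (X,X), θ sends Id_{(X,X)}^{⊗2d} to Id_X^{⊗d} ∈ Γ^d(Hom(X,X)). -/

import Mathlib

/-!
STATEMENT 12: Let `k` be a commutative ring and `n ≥ d ≥ 0`, `X = k^n`.  In the category of
strict polynomial bifunctors (contravariant in the first variable, covariant in the second)
there is an epimorphism `θ : P^{2d}_{(X,X)} = Γ^{2d}(Hom(−,X) ⊕ Hom(X,−)) ↠ Γ^d(gl)` where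
`gl(V,W) = Hom_k(V,W)`, such that evaluating at `(X,X)`, `θ` sends `Id_{(X,X)}^{⊗2d}` to
`Id_X^{⊗d}`.

We formalize the bifunctor map `θ` as a family of linear maps
`θ V W : (Hom(V,X) × Hom(X,W))^{⊗(d+d)} → Hom(V,W)^{⊗ d}` which is natural in `V` (contravariantly)
and `W` (covariantly); "θ is an epimorphism Γ^{2d}(…) ↠ Γ^d(gl)" is expressed by the condition
that for every pair of finitely generated projective modules `V, W`, the image of the divided
power submodule `Γ^{2d}` under `θ V W` is exactly `Γ^d(Hom(V,W))`. -/

open TensorProduct PiTensorProduct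

variable (k : Type) [CommRing k]

/-- Permutation action on a tensor power. -/
noncomputable def permTensorMap (d : ℕ) (V : Type) [AddCommGroup V] [Module k V]
    (σ : Equiv.Perm (Fin d)) :
    (⨂[k] (_ : Fin d), V) →ₗ[k] (⨂[k] (_ : Fin d), V) :=
  (PiTensorProduct.reindex k (fun _ : Fin d => V) σ).toLinearMap

/-- `Γ^d(V) = (V^{⊗d})^{S_d}`. -/
noncomputable def dividedPower (d : ℕ) (V : Type) [AddCommGroup V] [Module k V] :
    Submodule k (⨂[k] (_ : Fin d), V) :=
  ⨅ σ : Equiv.Perm (Fin d), LinearMap.ker (permTensorMap k d V σ - LinearMap.id)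

/-- The splitting `U^{⊗(a+b)} ≅ U^{⊗a} ⊗ U^{⊗b}`. -/
noncomputable def splitTensorPow (a b : ℕ) (U : Type) [AddCommGroup U] [Module k U] :
    (⨂[k] (_ : Fin (a + b)), U) ≃ₗ[k] ((⨂[k] (_ : Fin a), U) ⊗[k] (⨂[k] (_ : Fin b), U)) :=
  ((PiTensorProduct.tmulEquiv k U).trans
    (PiTensorProduct.reindex k (fun _ : Fin a ⊕ Fin b => U) finSumFinEquiv)).symm

/-- Functorial (`d`-th tensor power) action of a linear map. -/
noncomputable def powMap (d : ℕ) {U U' : Type} [AddCommGroup U] [Module k U]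
    [AddCommGroup U'] [Module k U'] (f : U →ₗ[k] U') :
    (⨂[k] (_ : Fin d), U) →ₗ[k] (⨂[k] (_ : Fin d), U') :=
  PiTensorProduct.map (fun _ => f)

/-- The map `j_d : U^{⊗d} ⊗ V^{⊗d} → (U ⊗ V)^{⊗d}`. -/
noncomputable def diagTensor (d : ℕ) (U V : Type) [AddCommGroup U] [Module k U]
    [AddCommGroup V] [Module k V] :
    ((⨂[k] (_ : Fin d), U) ⊗[k] (⨂[k] (_ : Fin d), V)) →ₗ[k] ⨂[k] (_ : Fin d), (U ⊗[k] V) :=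
  TensorProduct.lift (PiTensorProduct.map₂ (fun _ => TensorProduct.mk k U V))

/-- Composition `Hom(V,X) ⊗ Hom(X,W) → Hom(V,W)`, `(a, b) ↦ b ∘ a`. -/
noncomputable def compTensor (V X W : Type) [AddCommGroup V] [Module k V]
    [AddCommGroup X] [Module k X] [AddCommGroup W] [Module k W] :
    ((V →ₗ[k] X) ⊗[k] (X →ₗ[k] W)) →ₗ[k] (V →ₗ[k] W) :=
  TensorProduct.lift (LinearMap.llcomp k V X W).flip


/-- the map θ -/
noncomputable def theta (d : ℕ) (X V W : Type) [AddCommGroup X] [Module k X]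
    [AddCommGroup V] [Module k V] [AddCommGroup W] [Module k W] :
    (⨂[k] (_ : Fin (d + d)), ((V →ₗ[k] X) × (X →ₗ[k] W)))
      →ₗ[k] ⨂[k] (_ : Fin d), (V →ₗ[k] W) :=
  powMap k d (compTensor k V X W) ∘ₗ diagTensor k d _ _
    ∘ₗ (TensorProduct.map (powMap k d (LinearMap.fst k _ _)) (powMap k d (LinearMap.snd k _ _)))
    ∘ₗ (splitTensorPow k d d _).toLinearMap

lemma splitTensorPow_tprod (a b : ℕ) (U : Type) [AddCommGroup U] [Module k U]
    (z : Fin (a + b) → U) :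
    splitTensorPow k a b U (tprod k z) =
      (tprod k fun i : Fin a => z (Fin.castAdd b i)) ⊗ₜ[k]
        (tprod k fun i : Fin b => z (Fin.natAdd a i)) := by
  rw [splitTensorPow, LinearEquiv.symm_apply_eq, LinearEquiv.trans_apply,
    PiTensorProduct.tmulEquiv_apply, PiTensorProduct.reindex_tprod]
  congr 1
  funext i
  rcases h : finSumFinEquiv.symm i with j | j
  · have : i = Fin.castAdd b j := by
      have := congrArg finSumFinEquiv h; simpa using this
    simp [this, h]
  · have : i = Fin.natAdd a j := by
      have := congrArg finSumFinEquiv h; simpa using this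
    simp [this, h]

lemma theta_tprod (d : ℕ) (X V W : Type) [AddCommGroup X] [Module k X]
    [AddCommGroup V] [Module k V] [AddCommGroup W] [Module k W]
    (z : Fin (d + d) → (V →ₗ[k] X) × (X →ₗ[k] W)) :
    theta k d X V W (tprod k z) =
      tprod k (fun i : Fin d => (z (Fin.natAdd d i)).2 ∘ₗ (z (Fin.castAdd d i)).1) := by
  simp only [theta, LinearMap.comp_apply, LinearEquiv.coe_coe, splitTensorPow_tprod,
    TensorProduct.map_tmul, powMap, PiTensorProduct.map_tprod, diagTensor,
    TensorProduct.lift.tmul, PiTensorProduct.map₂_tprod_tprod, compTensor]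
  congr 1

lemma mem_dividedPower_iff (d : ℕ) (V : Type) [AddCommGroup V] [Module k V]
    (x : ⨂[k] (_ : Fin d), V) :
    x ∈ dividedPower k d V ↔ ∀ σ : Equiv.Perm (Fin d), permTensorMap k d V σ x = x := by
  simp [dividedPower, Submodule.mem_iInf, LinearMap.mem_ker, LinearMap.sub_apply,
    sub_eq_zero]

lemma permTensorMap_tprod (d : ℕ) (V : Type) [AddCommGroup V] [Module k V]
    (σ : Equiv.Perm (Fin d)) (z : Fin d → V) :
    permTensorMap k d V σ (tprod k z) = tprod k (fun i => z (σ.symm i)) := by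
  simp [permTensorMap, PiTensorProduct.reindex_tprod]

lemma powMap_comm_perm (d : ℕ) {U U' : Type} [AddCommGroup U] [Module k U]
    [AddCommGroup U'] [Module k U'] (f : U →ₗ[k] U') (σ : Equiv.Perm (Fin d)) :
    powMap k d f ∘ₗ permTensorMap k d U σ = permTensorMap k d U' σ ∘ₗ powMap k d f := by
  apply PiTensorProduct.ext
  ext z
  simp only [LinearMap.compMultilinearMap_apply, LinearMap.comp_apply, powMap,
    permTensorMap_tprod, PiTensorProduct.map_tprod]

/-- block sum permutation -/
def blockPerm (d : ℕ) (σ : Equiv.Perm (Fin d)) : Equiv.Perm (Fin (d + d)) :=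
  (finSumFinEquiv.symm.trans (Equiv.sumCongr σ σ)).trans finSumFinEquiv

lemma blockPerm_castAdd (d : ℕ) (σ : Equiv.Perm (Fin d)) (i : Fin d) :
    blockPerm d σ (Fin.castAdd d i) = Fin.castAdd d (σ i) := by
  simp only [blockPerm, Equiv.trans_apply, finSumFinEquiv_symm_apply_castAdd,
    Equiv.sumCongr_apply, Sum.map_inl, finSumFinEquiv_apply_left]

lemma blockPerm_natAdd (d : ℕ) (σ : Equiv.Perm (Fin d)) (i : Fin d) :
    blockPerm d σ (Fin.natAdd d i) = Fin.natAdd d (σ i) := by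
  simp only [blockPerm, Equiv.trans_apply, finSumFinEquiv_symm_apply_natAdd,
    Equiv.sumCongr_apply, Sum.map_inr, finSumFinEquiv_apply_right]

lemma blockPerm_symm (d : ℕ) (σ : Equiv.Perm (Fin d)) :
    (blockPerm d σ).symm = blockPerm d σ.symm := by
  ext i : 1
  simp [blockPerm]

lemma theta_comm_perm (d : ℕ) (X V W : Type) [AddCommGroup X] [Module k X]
    [AddCommGroup V] [Module k V] [AddCommGroup W] [Module k W] (σ : Equiv.Perm (Fin d)) :
    theta k d X V W ∘ₗ permTensorMap k (d + d) _ (blockPerm d σ)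
      = permTensorMap k d _ σ ∘ₗ theta k d X V W := by
  apply PiTensorProduct.ext
  ext z
  simp only [LinearMap.compMultilinearMap_apply, LinearMap.comp_apply, permTensorMap_tprod,
    theta_tprod]
  congr 1
  funext i
  have hsm : ∀ j, (blockPerm d σ).symm j = blockPerm d σ.symm j := fun j => by
    rw [blockPerm_symm]
  rw [hsm, hsm, blockPerm_castAdd, blockPerm_natAdd]

lemma theta_maps_dividedPower (d : ℕ) (X V W : Type) [AddCommGroup X] [Module k X]
    [AddCommGroup V] [Module k V] [AddCommGroup W] [Module k W]
    (x : ⨂[k] (_ : Fin (d + d)), ((V →ₗ[k] X) × (X →ₗ[k] W)))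
    (hx : x ∈ dividedPower k (d + d) _) :
    theta k d X V W x ∈ dividedPower k d (V →ₗ[k] W) := by
  rw [mem_dividedPower_iff] at hx ⊢
  intro σ
  have := congrArg (fun f => f x) (theta_comm_perm k d X V W σ)
  simp only [LinearMap.comp_apply] at this
  rw [← this, hx]

lemma theta_natural (d : ℕ) (X : Type) [AddCommGroup X] [Module k X]
    (V V' W W' : Type) [AddCommGroup V] [Module k V] [AddCommGroup V'] [Module k V']
    [AddCommGroup W] [Module k W] [AddCommGroup W'] [Module k W']
    (f : V' →ₗ[k] V) (g : W →ₗ[k] W') :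
    (theta k d X V' W') ∘ₗ powMap k (d + d)
        (LinearMap.prodMap (LinearMap.lcomp k X f) (LinearMap.llcomp k X W W' g))
      = powMap k d ((LinearMap.llcomp k V' W W' g) ∘ₗ (LinearMap.lcomp k W f))
        ∘ₗ (theta k d X V W) := by
  apply PiTensorProduct.ext
  ext z
  simp only [LinearMap.compMultilinearMap_apply, LinearMap.comp_apply, powMap,
    PiTensorProduct.map_tprod, theta_tprod]
  congr 1

/-! ### Module.Basis of tensor powers -/

def finSnocEquiv (d : ℕ) (ι : Type) : ((Fin d → ι) × ι) ≃ (Fin (d + 1) → ι) where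
  toFun p := Fin.snoc p.1 p.2
  invFun f := (fun i => f i.castSucc, f (Fin.last d))
  left_inv p := by simp
  right_inv f := by
    funext i
    refine Fin.lastCases ?_ ?_ i <;> simp

noncomputable def powSuccEquiv (d : ℕ) (M : Type) [AddCommGroup M] [Module k M] :
    (⨂[k] (_ : Fin (d + 1)), M) ≃ₗ[k] ((⨂[k] (_ : Fin d), M) ⊗[k] M) :=
  (PiTensorProduct.reindex k (fun _ : Fin (d + 1) => M) finSumFinEquiv.symm).trans
    ((PiTensorProduct.tmulEquiv k M).symm.trans
      (TensorProduct.congr (LinearEquiv.refl k _)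
        (PiTensorProduct.subsingletonEquiv (0 : Fin 1))))

lemma tmulEquiv_symm_tprod {ι ι₂ : Type} (M : Type) [AddCommGroup M] [Module k M]
    (g : ι ⊕ ι₂ → M) :
    (PiTensorProduct.tmulEquiv (ι := ι) (ι₂ := ι₂) k M).symm (tprod k g)
      = (tprod k (g ∘ Sum.inl)) ⊗ₜ[k] (tprod k (g ∘ Sum.inr)) := by
  rw [LinearEquiv.symm_apply_eq, PiTensorProduct.tmulEquiv_apply]
  congr 1
  funext x
  cases x <;> rfl

lemma powSuccEquiv_tprod (d : ℕ) (M : Type) [AddCommGroup M] [Module k M]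
    (f : Fin (d + 1) → M) :
    powSuccEquiv k d M (tprod k f)
      = (tprod k (fun i : Fin d => f i.castSucc)) ⊗ₜ[k] f (Fin.last d) := by
  simp only [powSuccEquiv, LinearEquiv.trans_apply, PiTensorProduct.reindex_tprod,
    Equiv.symm_symm]
  rw [tmulEquiv_symm_tprod]
  rw [TensorProduct.congr_tmul]
  simp only [LinearEquiv.refl_apply, PiTensorProduct.subsingletonEquiv_apply_tprod]
  congr 2
  all_goals try (funext i; simp [Fin.castSucc, Fin.castAdd])
  all_goals try (simp only [Function.comp_apply]; congr 1; apply Fin.ext; simp)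

lemma powSuccEquiv_symm_tmul (d : ℕ) (M : Type) [AddCommGroup M] [Module k M]
    (u : Fin d → M) (v : M) :
    (powSuccEquiv k d M).symm ((tprod k u) ⊗ₜ[k] v) = PiTensorProduct.tprod k (Fin.snoc u v) := by
  rw [LinearEquiv.symm_apply_eq, powSuccEquiv_tprod]
  congr 2
  · funext i; simp
  · simp

noncomputable def piTensorBasis : (d : ℕ) → (ι : Type) → (M : Type) → [AddCommGroup M] →
    [Module k M] → Module.Basis ι k M → Module.Basis (Fin d → ι) k (⨂[k] (_ : Fin d), M)
  | 0, ι, M, _, _, _ =>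
      (Module.Basis.singleton (Fin 0 → ι) k).map (PiTensorProduct.isEmptyEquiv (Fin 0)).symm
  | (d + 1), ι, M, _, _, b =>
      ((((piTensorBasis d ι M b).tensorProduct b).map
        (powSuccEquiv k d M).symm).reindex (finSnocEquiv d ι))

lemma piTensorBasis_apply : ∀ (d : ℕ) (ι M : Type) [AddCommGroup M] [Module k M]
    (b : Module.Basis ι k M) (m : Fin d → ι),
    piTensorBasis k d ι M b m = tprod k (fun i => b (m i))
  | 0, ι, M, _, _, b, m => by
      rw [piTensorBasis]
      simp only [Module.Basis.map_apply, Module.Basis.singleton_apply]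
      rw [PiTensorProduct.isEmptyEquiv_symm_apply, one_smul]
      congr 1
      funext i
      exact absurd i.2 (by simp)
  | (d + 1), ι, M, _, _, b, m => by
      rw [piTensorBasis]
      simp only [Module.Basis.reindex_apply, Module.Basis.map_apply, Module.Basis.tensorProduct_apply']
      have h1 : (finSnocEquiv d ι).symm m = (fun i => m i.castSucc, m (Fin.last d)) := rfl
      rw [h1]
      simp only [Module.Basis.tensorProduct_apply]
      rw [piTensorBasis_apply d ι M b]
      rw [powSuccEquiv_symm_tmul]
      congr 1
      funext i
      refine Fin.lastCases ?_ ?_ i <;> simp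

/-! ### Orbit sums span the divided power -/

section OrbitSums

variable {d : ℕ} {ι M : Type} [Fintype ι] [DecidableEq ι]
  [AddCommGroup M] [Module k M]

noncomputable def orbitFinset (m : Fin d → ι) : Finset (Fin d → ι) :=
  Finset.image (fun σ : Equiv.Perm (Fin d) => m ∘ σ) Finset.univ

noncomputable def orbitSum (b : Module.Basis ι k M) (m : Fin d → ι) : ⨂[k] (_ : Fin d), M :=
  ∑ w ∈ orbitFinset m, tprod k (fun i => b (w i))

lemma comp_eq_iff_of_perm {A B : Type} (σ : Equiv.Perm A) (u v : A → B) :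
    u ∘ σ = v ↔ u = v ∘ σ.symm := by
  constructor
  · rintro rfl; funext a; simp
  · rintro rfl; funext a; simp

lemma permTensorMap_orbitSum (b : Module.Basis ι k M) (m : Fin d → ι) (σ₀ : Equiv.Perm (Fin d)) :
    permTensorMap k d M σ₀ (orbitSum k b m) = orbitSum k b m := by
  rw [orbitSum, map_sum]
  simp only [permTensorMap_tprod]
  refine Finset.sum_nbij' (fun w => w ∘ σ₀.symm) (fun w => w ∘ σ₀) ?_ ?_ ?_ ?_ ?_
  · intro w hw
    rw [orbitFinset, Finset.mem_image] at hw ⊢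
    obtain ⟨σ, _, rfl⟩ := hw
    exact ⟨σ₀.symm.trans σ, Finset.mem_univ _, by funext j; rfl⟩
  · intro w hw
    rw [orbitFinset, Finset.mem_image] at hw ⊢
    obtain ⟨σ, _, rfl⟩ := hw
    exact ⟨σ₀.trans σ, Finset.mem_univ _, by funext j; rfl⟩
  · intro w _; funext i; simp
  · intro w _; funext i; simp
  · intro w _; rfl

lemma repr_permTensorMap (b : Module.Basis ι k M) (σ : Equiv.Perm (Fin d))
    (y : ⨂[k] (_ : Fin d), M) (m : Fin d → ι) :
    (piTensorBasis k d ι M b).repr (permTensorMap k d M σ y) m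
      = (piTensorBasis k d ι M b).repr y (m ∘ σ) := by
  have h : (Finsupp.lapply m : ((Fin d → ι) →₀ k) →ₗ[k] k)
        ∘ₗ ((piTensorBasis k d ι M b).repr :
        (⨂[k] (_ : Fin d), M) →ₗ[k] _) ∘ₗ permTensorMap k d M σ
      = (Finsupp.lapply (m ∘ σ) : ((Fin d → ι) →₀ k) →ₗ[k] k)
        ∘ₗ ((piTensorBasis k d ι M b).repr :
        (⨂[k] (_ : Fin d), M) →ₗ[k] _) := by
    apply Module.Basis.ext (piTensorBasis k d ι M b)
    intro u
    simp only [LinearMap.comp_apply, LinearEquiv.coe_coe]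
    rw [piTensorBasis_apply k d ι M b, permTensorMap_tprod]
    rw [show (tprod k fun i => b (u (σ.symm i))) = piTensorBasis k d ι M b (u ∘ σ.symm) by
      rw [piTensorBasis_apply k d ι M b]; rfl]
    rw [show (tprod k fun i => b (u i)) = piTensorBasis k d ι M b u by
      rw [piTensorBasis_apply k d ι M b]]
    simp only [Module.Basis.repr_self, Finsupp.lapply_apply]
    rw [Finsupp.single_apply, Finsupp.single_apply]
    congr 1
    simp only [eq_iff_iff]
    constructor
    · rintro rfl; funext a; simp
    · intro h2; funext a
      have := congrFun h2 (σ.symm a)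
      simpa using this
  have := LinearMap.congr_fun h y
  simpa using this

lemma mem_orbitFinset_self (m : Fin d → ι) : m ∈ orbitFinset m := by
  rw [orbitFinset, Finset.mem_image]
  exact ⟨Equiv.refl _, Finset.mem_univ _, rfl⟩

lemma orbitFinset_comp (m : Fin d → ι) (σ : Equiv.Perm (Fin d)) :
    orbitFinset (m ∘ σ) = orbitFinset m := by
  ext w
  simp only [orbitFinset, Finset.mem_image]
  constructor
  · rintro ⟨τ, _, rfl⟩; exact ⟨τ.trans σ, Finset.mem_univ _, by funext i; rfl⟩
  · rintro ⟨τ, _, rfl⟩; exact ⟨τ.trans σ.symm, Finset.mem_univ _, by funext i; simp⟩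

lemma dividedPower_le_span_orbitSum (b : Module.Basis ι k M) :
    dividedPower k d M ≤ Submodule.span k (Set.range (orbitSum k b)) := by
  intro x hx
  rw [mem_dividedPower_iff] at hx
  have hconst : ∀ (m : Fin d → ι) (σ : Equiv.Perm (Fin d)),
      (piTensorBasis k d ι M b).repr x (m ∘ σ) = (piTensorBasis k d ι M b).repr x m := by
    intro m σ
    rw [← repr_permTensorMap k b σ x m, hx σ]
  set B := piTensorBasis k d ι M b with hB
  set c : (Fin d → ι) → k := fun m => B.repr x m with hc
  have hrepr : x = ∑ m : (Fin d → ι), c m • B m := by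
    rw [hc]
    exact (Module.Basis.sum_repr B x).symm
  rw [hrepr]
  rw [← Finset.sum_fiberwise_of_maps_to (g := orbitFinset)
    (t := Finset.univ.image orbitFinset) (fun m _ => Finset.mem_image_of_mem _ (Finset.mem_univ m))]
  apply Submodule.sum_mem
  intro t ht
  rw [Finset.mem_image] at ht
  obtain ⟨m₀, _, rfl⟩ := ht
  have hfilter : Finset.univ.filter (fun m => orbitFinset m = orbitFinset m₀) = orbitFinset m₀ := by
    ext m
    simp only [Finset.mem_filter, Finset.mem_univ, true_and]
    constructor
    · intro h; rw [← h]; exact mem_orbitFinset_self m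
    · intro h
      rw [orbitFinset, Finset.mem_image] at h
      obtain ⟨σ, _, rfl⟩ := h
      exact orbitFinset_comp m₀ σ
  rw [hfilter]
  have hsum : ∑ m ∈ orbitFinset m₀, c m • B m = c m₀ • orbitSum k b m₀ := by
    rw [orbitSum, Finset.smul_sum]
    apply Finset.sum_congr rfl
    intro m hm
    rw [orbitFinset, Finset.mem_image] at hm
    obtain ⟨σ, _, rfl⟩ := hm
    rw [hc]
    simp only
    rw [hconst m₀ σ]
    congr 1
    rw [hB, piTensorBasis_apply k d ι M b]
  rw [hsum]
  exact Submodule.smul_mem _ _ (Submodule.subset_span (Set.mem_range_self m₀))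

end OrbitSums

/-! ### Module.Basis of Hom and rank one maps -/

section HomBasis

variable {ιV ιW : Type} [Fintype ιV] [DecidableEq ιV] [Fintype ιW] [DecidableEq ιW]
  {V W : Type} [AddCommGroup V] [Module k V] [AddCommGroup W] [Module k W]

noncomputable def homBasis (bV : Module.Basis ιV k V) (bW : Module.Basis ιW k W) :
    Module.Basis (ιW × ιV) k (V →ₗ[k] W) :=
  (Matrix.stdBasis k ιW ιV).map (LinearMap.toMatrix bV bW).symm

lemma homBasis_apply (bV : Module.Basis ιV k V) (bW : Module.Basis ιW k W) (t : ιW) (s : ιV) :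
    homBasis k bV bW (t, s) = (bV.coord s).smulRight (bW t) := by
  rw [homBasis, Module.Basis.map_apply, Matrix.stdBasis_eq_single, LinearMap.toMatrix_symm]
  apply Module.Basis.ext bV
  intro s'
  rw [Matrix.toLin_self]
  simp only [LinearMap.smulRight_apply, Module.Basis.coord_apply, Module.Basis.repr_self]
  rw [Finsupp.single_apply]
  by_cases h : s' = s
  · subst h
    simp [Matrix.single, Finset.sum_ite_eq']
  · rw [if_neg h, zero_smul]
    simp only [Matrix.single]
    rw [Finset.sum_eq_zero]
    intro t' _
    simp only [Matrix.of_apply]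
    rw [if_neg (by tauto), zero_smul]

end HomBasis

/-! ### composition of rank one maps -/

lemma smulRight_comp_smulRight {V X W : Type} [AddCommGroup V] [Module k V]
    [AddCommGroup X] [Module k X] [AddCommGroup W] [Module k W]
    (φ : X →ₗ[k] k) (w : W) (ψ : V →ₗ[k] k) (x : X) :
    (φ.smulRight w) ∘ₗ (ψ.smulRight x) = (φ x) • (ψ.smulRight w) := by
  ext v
  simp only [LinearMap.comp_apply, LinearMap.smulRight_apply, LinearMap.smul_apply, map_smul]
  rw [smul_smul, smul_smul, mul_comm]

/-! ### sums over images with matching fibers -/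

lemma sum_image_eq_sum_image {α β γ N : Type} [AddCommMonoid N] [DecidableEq α] [DecidableEq β]
    [DecidableEq γ]
    (s : Finset α) (f : α → β) (g : α → γ) (F : β → N) (G : γ → N)
    (hfib : ∀ a ∈ s, ∀ a' ∈ s, (f a = f a' ↔ g a = g a'))
    (hval : ∀ a ∈ s, F (f a) = G (g a)) :
    ∑ w ∈ s.image f, F w = ∑ u ∈ s.image g, G u := by
  induction s using Finset.induction with
  | empty => simp
  | @insert a s' ha ih =>
    rw [Finset.image_insert, Finset.image_insert]
    have has : a ∈ insert a s' := Finset.mem_insert_self a s'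
    by_cases hmem : f a ∈ s'.image f
    · have hmem' : g a ∈ s'.image g := by
        rw [Finset.mem_image] at hmem ⊢
        obtain ⟨a', ha', hfa⟩ := hmem
        exact ⟨a', ha', ((hfib a' (Finset.mem_insert_of_mem ha') a has).mp hfa)⟩
      rw [Finset.insert_eq_self.mpr hmem, Finset.insert_eq_self.mpr hmem']
      exact ih (fun a1 h1 a2 h2 => hfib a1 (Finset.mem_insert_of_mem h1) a2
        (Finset.mem_insert_of_mem h2))
        (fun a1 h1 => hval a1 (Finset.mem_insert_of_mem h1))
    · have hmem' : g a ∉ s'.image g := by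
        rw [Finset.mem_image] at hmem ⊢
        rintro ⟨a', ha', hga⟩
        exact hmem ⟨a', ha', ((hfib a' (Finset.mem_insert_of_mem ha') a has).mpr hga)⟩
      rw [Finset.sum_insert hmem, Finset.sum_insert hmem', hval a has]
      congr 1
      exact ih (fun a1 h1 a2 h2 => hfib a1 (Finset.mem_insert_of_mem h1) a2
        (Finset.mem_insert_of_mem h2))
        (fun a1 h1 => hval a1 (Finset.mem_insert_of_mem h1))

/-! ### The free case: orbit sums are hit by θ -/

section FreeCase

variable {d : ℕ} {ιX ιV ιW : Type}
  [Fintype ιX] [DecidableEq ιX] [Fintype ιV] [DecidableEq ιV] [Fintype ιW] [DecidableEq ιW]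
  {X V W : Type} [AddCommGroup X] [Module k X] [AddCommGroup V] [Module k V]
  [AddCommGroup W] [Module k W]

lemma orbitSum_mem_image_theta (bX : Module.Basis ιX k X) (bV : Module.Basis ιV k V) (bW : Module.Basis ιW k W)
    (hX : d ≤ Fintype.card ιX) (m : Fin d → ιW × ιV) :
    orbitSum k (homBasis k bV bW) m ∈
      Submodule.map (theta k d X V W)
        (dividedPower k (d + d) ((V →ₗ[k] X) × (X →ₗ[k] W))) := by
  classical
  obtain ⟨emb⟩ : Nonempty (↥(Finset.image m Finset.univ) ↪ ιX) := by
    apply Function.Embedding.nonempty_of_card_le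
    rw [Fintype.card_coe]
    exact le_trans (le_trans Finset.card_image_le (by simp)) hX
  set κ : Fin d → ιX := fun j => emb ⟨m j, Finset.mem_image_of_mem m (Finset.mem_univ j)⟩
    with hκ
  have hκiff : ∀ j j', κ j = κ j' ↔ m j = m j' := by
    intro j j'
    constructor
    · intro h
      have := emb.injective h
      simpa [Subtype.mk.injEq] using this
    · intro h; rw [hκ]; simp only; congr 1; exact Subtype.ext h
  set bA := homBasis k bV bX with hbA
  set bB := homBasis k bX bW with hbB
  set bH := homBasis k bV bW with hbH
  set bM := bA.prod bB with hbM
  set c : Fin (d + d) → ((ιX × ιV) ⊕ (ιW × ιX)) :=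
    Fin.addCases (fun j => Sum.inl (κ j, (m j).2)) (fun j => Sum.inr ((m j).1, κ j)) with hcdef
  have hcl : ∀ j, c (Fin.castAdd d j) = Sum.inl (κ j, (m j).2) := by
    intro j; rw [hcdef]; exact Fin.addCases_left j
  have hcr : ∀ j, c (Fin.natAdd d j) = Sum.inr ((m j).1, κ j) := by
    intro j; rw [hcdef]; exact Fin.addCases_right j
  have hMl : ∀ α, bM (Sum.inl α) = (bA α, 0) := by
    intro α; rw [hbM, Module.Basis.prod_apply]; rfl
  have hMr : ∀ β, bM (Sum.inr β) = (0, bB β) := by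
    intro β; rw [hbM, Module.Basis.prod_apply]; rfl
  -- composition of the relevant basis vectors
  have hcomp : ∀ (t : ιW) (r r' : ιX) (s : ιV),
      bB (t, r) ∘ₗ bA (r', s) = (if r' = r then (1:k) else 0) • bH (t, s) := by
    intro t r r' s
    rw [hbA, hbB, hbH, homBasis_apply, homBasis_apply, homBasis_apply,
      smulRight_comp_smulRight, Module.Basis.coord_apply, Module.Basis.repr_self, Finsupp.single_apply]
  -- value of θ on good terms
  have hgoodval : ∀ (σ : Equiv.Perm (Fin d)) (i : Fin d),
      ((bM ((c ∘ blockPerm d σ) (Fin.natAdd d i))).2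
        ∘ₗ (bM ((c ∘ blockPerm d σ) (Fin.castAdd d i))).1) = bH (m (σ i)) := by
    intro σ i
    simp only [Function.comp_apply, blockPerm_castAdd, blockPerm_natAdd, hcl, hcr, hMl, hMr]
    rw [hcomp, if_pos rfl, one_smul]
  refine ⟨orbitSum k bM c, ?_, ?_⟩
  · rw [SetLike.mem_coe, mem_dividedPower_iff]
    intro σ; exact permTensorMap_orbitSum k bM c σ
  -- the zero terms
  have hzero : ∀ w ∈ orbitFinset c,
      w ∉ Finset.image (fun σ : Equiv.Perm (Fin d) => c ∘ blockPerm d σ) Finset.univ →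
      (tprod k (fun i : Fin d =>
        (bM (w (Fin.natAdd d i))).2 ∘ₗ (bM (w (Fin.castAdd d i))).1)) = 0 := by
    intro w hw hnot
    rw [orbitFinset, Finset.mem_image] at hw
    obtain ⟨τ, _, rfl⟩ := hw
    have hsplit : ∀ x : Fin (d + d), (∃ j, x = Fin.castAdd d j) ∨ (∃ j, x = Fin.natAdd d j) :=
      fun x => Fin.addCases (fun j => Or.inl ⟨j, rfl⟩) (fun j => Or.inr ⟨j, rfl⟩) x
    by_cases h1 : ∀ i : Fin d, ∃ j, τ (Fin.castAdd d i) = Fin.castAdd d j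
    swap
    · push_neg at h1
      obtain ⟨i, hi⟩ := h1
      rcases hsplit (τ (Fin.castAdd d i)) with ⟨j, hj⟩ | ⟨j, hj⟩
      · exact absurd hj (hi j)
      · apply MultilinearMap.map_coord_zero (PiTensorProduct.tprod k) i
        simp only [Function.comp_apply, hj, hcr, hMr]
        exact LinearMap.comp_zero _
    by_cases h2 : ∀ i : Fin d, ∃ j, τ (Fin.natAdd d i) = Fin.natAdd d j
    swap
    · push_neg at h2
      obtain ⟨i, hi⟩ := h2
      rcases hsplit (τ (Fin.natAdd d i)) with ⟨j, hj⟩ | ⟨j, hj⟩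
      · apply MultilinearMap.map_coord_zero (PiTensorProduct.tprod k) i
        simp only [Function.comp_apply, hj, hcl, hMl]
        exact LinearMap.zero_comp _
      · exact absurd hj (hi j)
    choose j1 hj1 using h1
    choose j2 hj2 using h2
    by_cases h3 : ∀ i, κ (j2 i) = κ (j1 i)
    swap
    · push_neg at h3
      obtain ⟨i, hi⟩ := h3
      apply MultilinearMap.map_coord_zero (PiTensorProduct.tprod k) i
      simp only [Function.comp_apply, hj1, hj2, hcl, hcr, hMl, hMr]
      rw [hcomp, if_neg (fun hh => hi hh.symm), zero_smul]
    · exfalso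
      apply hnot
      have hminj : ∀ i, m (j2 i) = m (j1 i) := fun i => (hκiff _ _).mp (h3 i)
      have hj1inj : Function.Injective j1 := by
        intro a b hab
        have h5 : τ (Fin.castAdd d a) = τ (Fin.castAdd d b) := by rw [hj1, hj1, hab]
        have h6 := τ.injective h5
        exact Fin.castAdd_injective d d h6
      let σ := Equiv.ofBijective j1 (Finite.injective_iff_bijective.mp hj1inj)
      refine Finset.mem_image.mpr ⟨σ, Finset.mem_univ _, ?_⟩
      funext x
      refine Fin.addCases (fun i => ?_) (fun i => ?_) x
      · show c (blockPerm d σ (Fin.castAdd d i)) = c (τ (Fin.castAdd d i))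
        rw [blockPerm_castAdd, hj1 i]
        rfl
      · show c (blockPerm d σ (Fin.natAdd d i)) = c (τ (Fin.natAdd d i))
        rw [blockPerm_natAdd, hj2 i, hcr, hcr]
        have h4 : σ i = j1 i := rfl
        rw [h4, ← hminj i, h3 i]
  -- the computation
  rw [orbitSum, map_sum]
  simp only [theta_tprod]
  rw [← Finset.sum_subset (s₁ := Finset.image
      (fun σ : Equiv.Perm (Fin d) => c ∘ blockPerm d σ) Finset.univ) ?hsub ?hvan]
  case hsub =>
    intro w hw
    rw [Finset.mem_image] at hw
    obtain ⟨σ, _, rfl⟩ := hw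
    rw [orbitFinset, Finset.mem_image]
    exact ⟨blockPerm d σ, Finset.mem_univ _, rfl⟩
  case hvan => exact hzero
  rw [orbitSum, orbitFinset]
  refine sum_image_eq_sum_image Finset.univ (fun σ : Equiv.Perm (Fin d) => c ∘ blockPerm d σ)
    (fun σ : Equiv.Perm (Fin d) => m ∘ σ) _ _ ?_ ?_
  · intro σ _ σ' _
    constructor
    · intro h
      funext i
      have h5 := congrFun h (Fin.castAdd d i)
      simp only [Function.comp_apply, blockPerm_castAdd, hcl] at h5
      rw [Sum.inl.injEq, Prod.mk.injEq] at h5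
      exact (hκiff _ _).mp h5.1
    · intro h
      have hm : ∀ i, m (σ i) = m (σ' i) := fun i => congrFun h i
      have hκe : ∀ i, κ (σ i) = κ (σ' i) := fun i => (hκiff _ _).mpr (hm i)
      funext x
      refine Fin.addCases (fun i => ?_) (fun i => ?_) x
      · show c (blockPerm d σ (Fin.castAdd d i)) = c (blockPerm d σ' (Fin.castAdd d i))
        rw [blockPerm_castAdd, blockPerm_castAdd, hcl, hcl, hκe i, hm i]
      · show c (blockPerm d σ (Fin.natAdd d i)) = c (blockPerm d σ' (Fin.natAdd d i))
        rw [blockPerm_natAdd, blockPerm_natAdd, hcr, hcr, hκe i, hm i]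
  · intro σ _
    congr 1
    funext i
    exact hgoodval σ i

end FreeCase

/-! ### From free to projective -/

lemma exists_section (V : Type) [AddCommGroup V] [Module k V] [Module.Projective k V]
    [Module.Finite k V] :
    ∃ (n : ℕ) (π : (Fin n → k) →ₗ[k] V) (ι : V →ₗ[k] (Fin n → k)), π ∘ₗ ι = LinearMap.id := by
  obtain ⟨n, s, hs⟩ := Module.Finite.exists_fin (R := k) (M := V)
  set π := (Pi.basisFun k (Fin n)).constr (S := k) s with hπ
  have hsurj : Function.Surjective π := by
    rw [← LinearMap.range_eq_top]
    rw [eq_top_iff, ← hs]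
    rw [Submodule.span_le]
    rintro _ ⟨i, rfl⟩
    exact ⟨Pi.basisFun k (Fin n) i, by rw [hπ, Module.Basis.constr_basis]⟩
  obtain ⟨ι, hι⟩ := Module.projective_lifting_property π LinearMap.id hsurj
  exact ⟨n, π, ι, hι⟩

lemma dividedPower_le_image_theta (d : ℕ) (X : Type) [AddCommGroup X] [Module k X]
    [Module.Free k X] [Module.Finite k X] (hX : d ≤ Module.finrank k X)
    (V W : Type) [AddCommGroup V] [Module k V] [AddCommGroup W] [Module k W]
    [Module.Free k V] [Module.Finite k V] [Module.Free k W] [Module.Finite k W] :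
    dividedPower k d (V →ₗ[k] W) ≤
      Submodule.map (theta k d X V W) (dividedPower k (d + d) ((V →ₗ[k] X) × (X →ₗ[k] W))) := by
  rcases subsingleton_or_nontrivial k with hk | hk
  · intro y _
    haveI : Subsingleton (⨂[k] (_ : Fin d), (V →ₗ[k] W)) :=
      Module.subsingleton k _
    exact ⟨0, Submodule.zero_mem _, Subsingleton.elim _ _⟩
  classical
  letI := Classical.decEq (Module.Free.ChooseBasisIndex k V)
  letI := Classical.decEq (Module.Free.ChooseBasisIndex k W)
  letI := Classical.decEq (Module.Free.ChooseBasisIndex k X)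
  set bV := Module.Free.chooseBasis k V
  set bW := Module.Free.chooseBasis k W
  set bX := Module.Free.chooseBasis k X
  refine le_trans (dividedPower_le_span_orbitSum k (homBasis k bV bW)) ?_
  rw [Submodule.span_le]
  rintro _ ⟨m, rfl⟩
  have hcard : d ≤ Fintype.card (Module.Free.ChooseBasisIndex k X) := by
    rwa [← Module.finrank_eq_card_chooseBasisIndex]
  exact orbitSum_mem_image_theta k bX bV bW hcard m

lemma dividedPower_le_image_theta_proj (d : ℕ) (X : Type) [AddCommGroup X] [Module k X]
    [Module.Free k X] [Module.Finite k X] (hX : d ≤ Module.finrank k X)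
    (V W : Type) [AddCommGroup V] [Module k V] [AddCommGroup W] [Module k W]
    [Module.Projective k V] [Module.Finite k V] [Module.Projective k W] [Module.Finite k W] :
    dividedPower k d (V →ₗ[k] W) ≤
      Submodule.map (theta k d X V W) (dividedPower k (d + d) ((V →ₗ[k] X) × (X →ₗ[k] W))) := by
  obtain ⟨nV, πV, ιV, hV⟩ := exists_section k V
  obtain ⟨nW, πW, ιW, hW⟩ := exists_section k W
  intro y hy
  rw [mem_dividedPower_iff] at hy
  -- lift y to the free modules
  set h : (V →ₗ[k] W) →ₗ[k] ((Fin nV → k) →ₗ[k] (Fin nW → k)) :=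
    (LinearMap.llcomp k (Fin nV → k) W (Fin nW → k) ιW) ∘ₗ (LinearMap.lcomp k W πV) with hh
  set y' := powMap k d h y with hy'
  have hy'mem : y' ∈ dividedPower k d ((Fin nV → k) →ₗ[k] (Fin nW → k)) := by
    rw [mem_dividedPower_iff]
    intro σ
    rw [hy']
    have := LinearMap.congr_fun (powMap_comm_perm k d h σ) y
    simp only [LinearMap.comp_apply] at this
    rw [← this, hy σ]
  obtain ⟨x', hx'mem, hx'⟩ := dividedPower_le_image_theta k d X hX
    (Fin nV → k) (Fin nW → k) hy'mem
  -- transport back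
  refine ⟨powMap k (d + d)
    (LinearMap.prodMap (LinearMap.lcomp k X ιV) (LinearMap.llcomp k X _ W πW)) x', ?_, ?_⟩
  · rw [SetLike.mem_coe, mem_dividedPower_iff]
    rw [SetLike.mem_coe, mem_dividedPower_iff] at hx'mem
    intro σ
    have := LinearMap.congr_fun (powMap_comm_perm k (d + d)
      (LinearMap.prodMap (LinearMap.lcomp k X ιV) (LinearMap.llcomp k X _ W πW)) σ) x'
    simp only [LinearMap.comp_apply] at this
    rw [← this, hx'mem σ]
  · have hnat := LinearMap.congr_fun (theta_natural k d X (Fin nV → k) V (Fin nW → k) W ιV πW) x'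
    simp only [LinearMap.comp_apply] at hnat
    rw [hnat, hx', hy']
    have hcomp : ((LinearMap.llcomp k V (Fin nW → k) W πW)
        ∘ₗ (LinearMap.lcomp k (Fin nW → k) ιV)) ∘ₗ h = LinearMap.id := by
      ext φ v
      simp only [LinearMap.comp_apply, LinearMap.llcomp_apply, LinearMap.lcomp_apply,
        LinearMap.id_apply, hh]
      rw [show πW (ιW (φ (πV (ιV v)))) = (πW ∘ₗ ιW) (φ ((πV ∘ₗ ιV) v)) from rfl, hV, hW]
      rfl
    have : powMap k d ((LinearMap.llcomp k V (Fin nW → k) W πW)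
        ∘ₗ (LinearMap.lcomp k (Fin nW → k) ιV)) ∘ₗ powMap k d h = LinearMap.id := by
      rw [powMap, powMap, ← PiTensorProduct.map_comp]
      rw [show (fun _ : Fin d => ((LinearMap.llcomp k V (Fin nW → k) W πW)
          ∘ₗ (LinearMap.lcomp k (Fin nW → k) ιV)) ∘ₗ h) = fun _ : Fin d => LinearMap.id by
        funext _; rw [hcomp]]
      exact PiTensorProduct.map_id
    exact LinearMap.congr_fun this y


/-- For `X` finitely generated free of rank `≥ d` there is a family of maps
`θ V W : ((Hom(V,X) × Hom(X,W))^{⊗(d+d)}) → Hom(V,W)^{⊗d}`, natural in `(V,W)` (contravariant in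
`V`, covariant in `W`), which restricts to an epimorphism
`Γ^{2d}(Hom(−,X) ⊕ Hom(X,−)) ↠ Γ^d(gl)` on every pair of finitely generated projective modules,
and which sends `Id_{(X,X)}^{⊗2d}` to `Id_X^{⊗d}` upon evaluation at `(X,X)`. -/
theorem statement12 (d : ℕ) (X : Type) [AddCommGroup X] [Module k X]
    [Module.Free k X] [Module.Finite k X] (hX : d ≤ Module.finrank k X) :
    ∃ θ : ∀ (V W : Type) [AddCommGroup V] [Module k V] [AddCommGroup W] [Module k W],
        (⨂[k] (_ : Fin (d + d)), ((V →ₗ[k] X) × (X →ₗ[k] W)))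
          →ₗ[k] ⨂[k] (_ : Fin d), (V →ₗ[k] W),
      -- naturality: contravariant in the first variable, covariant in the second
      (∀ (V V' W W' : Type) [AddCommGroup V] [Module k V] [AddCommGroup V'] [Module k V']
          [AddCommGroup W] [Module k W] [AddCommGroup W'] [Module k W']
          (f : V' →ₗ[k] V) (g : W →ₗ[k] W'),
        (θ V' W') ∘ₗ powMap k (d + d)
            (LinearMap.prodMap (LinearMap.lcomp k X f) (LinearMap.llcomp k X W W' g))
          = powMap k d ((LinearMap.llcomp k V' W W' g) ∘ₗ (LinearMap.lcomp k W f)) ∘ₗ (θ V W))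
      -- θ is an epimorphism of the divided powers: on each finitely generated projective pair
      -- the image of Γ^{2d} is exactly Γ^d(Hom(V,W))
      ∧ (∀ (V W : Type) [AddCommGroup V] [Module k V] [AddCommGroup W] [Module k W]
          [Module.Projective k V] [Module.Finite k V] [Module.Projective k W] [Module.Finite k W],
          Submodule.map (θ V W) (dividedPower k (d + d) ((V →ₗ[k] X) × (X →ₗ[k] W)))
            = dividedPower k d (V →ₗ[k] W))
      -- evaluation at (X,X) sends Id^{⊗2d} to Id^{⊗d}
      ∧ θ X X (PiTensorProduct.tprod k
            (fun _ : Fin (d + d) => ((LinearMap.id : X →ₗ[k] X), (LinearMap.id : X →ₗ[k] X))))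
          = PiTensorProduct.tprod k (fun _ : Fin d => (LinearMap.id : X →ₗ[k] X)) := by
  
  refine ⟨fun V W _ _ _ _ => theta k d X V W, ?_, ?_, ?_⟩
  · intro V V' W W' _ _ _ _ _ _ _ _ f g
    exact theta_natural k d X V V' W W' f g
  · intro V W _ _ _ _ _ _ _ _
    apply le_antisymm
    · rintro y ⟨x, hx, rfl⟩
      exact theta_maps_dividedPower k d X V W x hx
    · exact dividedPower_le_image_theta_proj k d X hX V W
  · rw [theta_tprod]
    simp
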